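/- arXiv:2507.02281 — 3 statements merged into one kernel-verified Lean document; each statement's English description precedes it below -/
import Mathlib

section
/- Let k be an odd positive integer. For every vector w : Fin (2k) → ZMod 2 there exist vectors u, v : Fin (2k) → ZMod 2 such that: (i) u + v = w; (ii) either u = 0 or the Hamming weight of u equals k − 1; (iii) either v = 0 or the Hamming weight of v equals k or k + 1; and (iv) if w ≠ 0 then u and v are not both zero (at most one of u and v is zero). -/
open Finset

/-- Indicator vector of a finite set of coordinates. -/
def ind {n : ℕ} (S : Finset (Fin n)) : Fin n → ZMod 2 := fun i => if i ∈ S then 1 else 0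

lemma hammingNorm_ind {n : ℕ} (S : Finset (Fin n)) : hammingNorm (ind S) = S.card := by
  unfold hammingNorm ind
  congr 1
  ext i
  by_cases h : i ∈ S <;> simp [h]

lemma ind_add {n : ℕ} (S T : Finset (Fin n)) : ind S + ind T = ind (symmDiff S T) := by
  funext i
  simp only [Pi.add_apply, ind, Finset.mem_symmDiff]
  by_cases hS : i ∈ S <;> by_cases hT : i ∈ T <;> simp [hS, hT] <;> decide

/-- Correctness guarantee of the `Decompose` algorithm: any `w ∈ F₂^{2k}` (for odd
`k > 0`) splits as `w = u + v` with `u ∈ 𝒳 = {x : wt x = k-1} ∪ {0}` and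
`v ∈ 𝒴 ∪ 𝒵 = {y : wt y = k} ∪ {z : wt z = k+1} ∪ {0}`, and if `w ≠ 0` then
at most one of `u`, `v` is zero. -/
theorem decompose_exists (k : ℕ) (hk0 : 0 < k) (hk : Odd k)
    (w : Fin (2 * k) → ZMod 2) :
    ∃ u v : Fin (2 * k) → ZMod 2,
      u + v = w ∧
      (u = 0 ∨ hammingNorm u = k - 1) ∧
      (v = 0 ∨ hammingNorm v = k ∨ hammingNorm v = k + 1) ∧
      (w ≠ 0 → ¬(u = 0 ∧ v = 0)) := by
  classical
  set W : Finset (Fin (2*k)) := Finset.univ.filter (fun i => w i = 1) with hW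
  have hwW : w = ind W := by
    funext i
    have h2 : ∀ x : ZMod 2, x = 0 ∨ x = 1 := by decide
    rcases h2 (w i) with h | h <;> simp [ind, hW, h]
  set m := W.card with hm
  have hm2k : m ≤ 2 * k := by
    have := Finset.card_le_univ W
    simpa using this
  by_cases hm0 : m = 0
  · have hWe : W = ∅ := Finset.card_eq_zero.mp hm0
    have hw0 : w = 0 := by
      rw [hwW, hWe]; funext i; simp [ind]
    exact ⟨0, 0, by simp [hw0], Or.inl rfl, Or.inl rfl, fun hw _ => hw hw0⟩
  · have hm1 : 1 ≤ m := Nat.one_le_iff_ne_zero.mpr hm0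
    set t := (m - 1) / 2 with ht
    have htm : t ≤ m := by omega
    have htk : t ≤ k - 1 := by omega
    obtain ⟨A, hAW, hAcard⟩ := Finset.exists_subset_card_eq htm
    have hcompl : k - 1 - t ≤ Wᶜ.card := by
      rw [Finset.card_compl]
      simp only [Fintype.card_fin]
      omega
    obtain ⟨B, hBW, hBcard⟩ := Finset.exists_subset_card_eq hcompl
    have hdisj : Disjoint A B := by
      refine Finset.disjoint_left.mpr (fun i hiA hiB => ?_)
      exact (Finset.mem_compl.mp (hBW hiB)) (hAW hiA)
    set S := A ∪ B with hS
    have hScard : S.card = k - 1 := by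
      rw [hS, Finset.card_union_of_disjoint hdisj, hAcard, hBcard]
      omega
    have hWS : symmDiff W S = (W \ A) ∪ B := by
      ext i
      have h1 : i ∈ A → i ∈ W := @hAW i
      have h2 : i ∈ B → i ∉ W := fun h => Finset.mem_compl.mp (hBW h)
      simp only [Finset.mem_symmDiff, hS, Finset.mem_union, Finset.mem_sdiff]
      tauto
    have hdisj2 : Disjoint (W \ A) B := by
      refine Finset.disjoint_left.mpr (fun i hi hiB => ?_)
      exact (Finset.mem_compl.mp (hBW hiB)) (Finset.mem_sdiff.mp hi).1
    have hvcard : (symmDiff W S).card = (m - t) + (k - 1 - t) := by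
      rw [hWS, Finset.card_union_of_disjoint hdisj2, Finset.card_sdiff_of_subset hAW, hAcard, hBcard]
    refine ⟨ind S, ind (symmDiff W S), ?_, ?_, ?_, ?_⟩
    · rw [ind_add, symmDiff_comm W S, symmDiff_symmDiff_cancel_left, hwW]
    · exact Or.inr (by rw [hammingNorm_ind, hScard])
    · rw [hammingNorm_ind, hvcard]
      rcases Nat.even_or_odd m with ⟨c, hc⟩ | ⟨c, hc⟩
      · exact Or.inr (Or.inr (by omega))
      · exact Or.inr (Or.inl (by omega))
    · rintro hw ⟨-, hv0⟩
      have h0 : hammingNorm (ind (symmDiff W S)) = 0 := by rw [hv0, hammingNorm_zero]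
      rw [hammingNorm_ind, hvcard] at h0
      omega
end

section
/- Let q ≥ 2 and h, N, k, ℓ, n be positive integers, and let V ≥ 0 be a real number. Let A : Matrix (Fin h) (Fin N) (ZMod q), let α : Fin k → (Fin h → ZMod q), let τ : Fin k → ℕ, and let u, v, m : Fin k → ℤ satisfy u j + v j = m j for every j. Suppose e_u, e_v : Fin N → ℤ satisfy ‖e_u‖ ≤ V·√(ℓ·n), ‖e_v‖ ≤ V·√(ℓ·n), A·e_u = Σ_{j=1}^{k} (−1)^{τ j} · (u j) · α j, and A·e_v = Σ_{j=1}^{k} (−1)^{τ j} · (v j) · α j (equalities in (ZMod q)^h, with integer scalars cast into ZMod q). Then the signature e := e_u + e_v satisfies both verification conditions: ‖e‖ ≤ 2kV·√(2kℓn) and A·e = Σ_{j=1}^{k} (−1)^{τ j} · (m j) · α j. -/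
/-- The Euclidean norm of an integer vector. -/
noncomputable def intEucNorm {N : ℕ} (e : Fin N → ℤ) : ℝ :=
  Real.sqrt (∑ i, ((e i : ℝ)) ^ 2)

lemma intEucNorm_eq {N : ℕ} (e : Fin N → ℤ) :
    intEucNorm e = ‖(EuclideanSpace.equiv (Fin N) ℝ).symm (fun i => (e i : ℝ))‖ := by
  rw [EuclideanSpace.norm_eq, intEucNorm]
  congr 1
  apply Finset.sum_congr rfl
  intro i _
  simp [sq_abs]

lemma intEucNorm_nonneg {N : ℕ} (e : Fin N → ℤ) : 0 ≤ intEucNorm e :=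
  Real.sqrt_nonneg _

lemma intEucNorm_add_le {N : ℕ} (a b : Fin N → ℤ) :
    intEucNorm (a + b) ≤ intEucNorm a + intEucNorm b := by
  have h := norm_add_le ((EuclideanSpace.equiv (Fin N) ℝ).symm (fun i => (a i : ℝ)))
    ((EuclideanSpace.equiv (Fin N) ℝ).symm (fun i => (b i : ℝ)))
  rw [intEucNorm_eq, intEucNorm_eq, intEucNorm_eq]
  refine le_trans (le_of_eq ?_) h
  congr 1
  ext i
  simp

/-- Deterministic core of the correctness of `HR-Sign`: if `e(u)` and `e(v)` are
short preimages of the syndromes `t(u)` and `t(v)` for a decomposition `m = u + v`,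
then `e = e(u) + e(v)` passes both verification conditions for message `m`. -/
theorem hrsign_correct (q h N k ℓ n : ℕ) (hq : 2 ≤ q) (hh : 0 < h) (hN : 0 < N)
    (hk : 0 < k) (hℓ : 0 < ℓ) (hn : 0 < n) (V : ℝ) (hV : 0 ≤ V)
    (A : Matrix (Fin h) (Fin N) (ZMod q)) (α : Fin k → Fin h → ZMod q)
    (τ : Fin k → ℕ) (u v m : Fin k → ℤ) (huv : ∀ j, u j + v j = m j)
    (e_u e_v : Fin N → ℤ)
    (hnu : intEucNorm e_u ≤ V * Real.sqrt ((ℓ : ℝ) * n))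
    (hnv : intEucNorm e_v ≤ V * Real.sqrt ((ℓ : ℝ) * n))
    (hAu : A.mulVec (fun i => (e_u i : ZMod q))
      = ∑ j : Fin k, ((((-1 : ℤ) ^ τ j * u j : ℤ) : ZMod q)) • α j)
    (hAv : A.mulVec (fun i => (e_v i : ZMod q))
      = ∑ j : Fin k, ((((-1 : ℤ) ^ τ j * v j : ℤ) : ZMod q)) • α j) :
    intEucNorm (e_u + e_v) ≤ 2 * k * V * Real.sqrt (2 * k * ℓ * n) ∧
    A.mulVec (fun i => ((e_u + e_v) i : ZMod q))
      = ∑ j : Fin k, ((((-1 : ℤ) ^ τ j * m j : ℤ) : ZMod q)) • α j := by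
  constructor
  · have h1 : intEucNorm (e_u + e_v) ≤ 2 * (V * Real.sqrt ((ℓ : ℝ) * n)) := by
      have := intEucNorm_add_le e_u e_v
      linarith
    refine h1.trans ?_
    have hk1 : (1 : ℝ) ≤ k := by exact_mod_cast hk
    have hsqrt : Real.sqrt ((ℓ : ℝ) * n) ≤ Real.sqrt (2 * k * ℓ * n) := by
      apply Real.sqrt_le_sqrt
      have hℓn : (0 : ℝ) ≤ (ℓ : ℝ) * n := by positivity
      nlinarith
    calc 2 * (V * Real.sqrt ((ℓ : ℝ) * n))
        ≤ 2 * (V * Real.sqrt (2 * k * ℓ * n)) := by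
          have := Real.sqrt_nonneg ((ℓ : ℝ) * n)
          nlinarith [Real.sqrt_nonneg (2 * (k:ℝ) * ℓ * n)]
      _ ≤ 2 * k * V * Real.sqrt (2 * k * ℓ * n) := by
          have hs := Real.sqrt_nonneg (2 * (k:ℝ) * ℓ * n)
          nlinarith [mul_nonneg (mul_nonneg (sub_nonneg.mpr hk1) hV) hs]
  · have hcast : (fun i => ((e_u + e_v) i : ZMod q))
        = (fun i => (e_u i : ZMod q)) + (fun i => (e_v i : ZMod q)) := by
      ext i; push_cast [Pi.add_apply]; ring
    rw [hcast, Matrix.mulVec_add, hAu, hAv, ← Finset.sum_add_distrib]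
    apply Finset.sum_congr rfl
    intro j _
    rw [← add_smul]
    congr 1
    rw [← huv j]
    push_cast
    ring
end

section
/- Let q ≥ 2 and h, N, k, ℓ, n, p be positive integers with p ≤ k, and let V ≥ 0 be a real number. Let A : Matrix (Fin h) (Fin N) (ZMod q), let α : Fin k → (Fin h → ZMod q), let τ : Fin k → ℕ, and for each j = 1, …, p let c_j ∈ {0, 1} ⊆ ℤ, let m_j : Fin k → ℤ, and let e_j : Fin N → ℤ satisfy ‖e_j‖ ≤ 2V·√(ℓ·n) and A·e_j = Σ_{i=1}^{k} (−1)^{τ i} · (m_j i) · α i (equality in (ZMod q)^h, with integer scalars cast into ZMod q). Then the combined signature e := Σ_{j=1}^{p} c_j · e_j satisfies both verification conditions for the combined message m := Σ_{j=1}^{p} c_j · m_j: namely ‖e‖ ≤ 2kV·√(2kℓn) and A·e = Σ_{i=1}^{k} (−1)^{τ i} · (m i) · α i. -/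
noncomputable def toEuc {N : ℕ} (v : Fin N → ℝ) : EuclideanSpace ℝ (Fin N) :=
  (WithLp.equiv 2 (Fin N → ℝ)).symm v

lemma toEuc_sum {N p : ℕ} (f : Fin p → Fin N → ℝ) :
    toEuc (∑ j, f j) = ∑ j, toEuc (f j) := by
  simp [toEuc]

lemma toEuc_smul {N : ℕ} (r : ℝ) (v : Fin N → ℝ) : toEuc (r • v) = r • toEuc v := rfl

lemma intEucNorm_eq_norm {N : ℕ} (e : Fin N → ℤ) :
    intEucNorm e = ‖toEuc (fun i => (e i : ℝ))‖ := by
  rw [intEucNorm, EuclideanSpace.norm_eq]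
  simp [toEuc, Real.norm_eq_abs, sq_abs]

/-- Deterministic core of the homomorphic correctness of `Combine`: given `p ≤ k`
valid signatures `e_j` on messages `m_j` under a common tag `τ` and ring matrix `A`,
the 0/1-combination `∑ j, c j • e j` is a valid signature on `∑ j, c j • m j`. -/
theorem combine_correct (q h N k ℓ n p : ℕ) (hq : 2 ≤ q) (hh : 0 < h) (hN : 0 < N)
    (hk : 0 < k) (hℓ : 0 < ℓ) (hn : 0 < n) (hp : 0 < p) (hpk : p ≤ k)
    (V : ℝ) (hV : 0 ≤ V)
    (A : Matrix (Fin h) (Fin N) (ZMod q)) (α : Fin k → Fin h → ZMod q)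
    (τ : Fin k → ℕ) (c : Fin p → ℤ) (hc : ∀ j, c j = 0 ∨ c j = 1)
    (m : Fin p → Fin k → ℤ) (e : Fin p → Fin N → ℤ)
    (hne : ∀ j, intEucNorm (e j) ≤ 2 * V * Real.sqrt ((ℓ : ℝ) * n))
    (hAe : ∀ j, A.mulVec (fun i => (e j i : ZMod q))
      = ∑ i : Fin k, ((((-1 : ℤ) ^ τ i * m j i : ℤ) : ZMod q)) • α i) :
    intEucNorm (∑ j : Fin p, c j • e j) ≤ 2 * k * V * Real.sqrt (2 * k * ℓ * n) ∧
    A.mulVec (fun i => ((∑ j : Fin p, c j • e j) i : ZMod q))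
      = ∑ i : Fin k,
          ((((-1 : ℤ) ^ τ i * (∑ j : Fin p, c j • m j) i : ℤ) : ZMod q)) • α i := by
  constructor
  · -- norm bound
    rw [intEucNorm_eq_norm]
    have heq : toEuc (fun i => ((∑ j : Fin p, c j • e j) i : ℝ))
        = ∑ j : Fin p, (c j : ℝ) • toEuc (fun i => (e j i : ℝ)) := by
      have hfun : (fun i => ((∑ j : Fin p, c j • e j) i : ℝ))
          = ∑ j : Fin p, (c j : ℝ) • (fun i => (e j i : ℝ)) := by
        funext i
        simp only [Finset.sum_apply, Pi.smul_apply, smul_eq_mul]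
        push_cast
        ring
      rw [hfun, toEuc_sum]
      exact Finset.sum_congr rfl fun j _ => toEuc_smul _ _
    rw [heq]
    calc ‖∑ j : Fin p, (c j : ℝ) • toEuc (fun i => (e j i : ℝ))‖
        ≤ ∑ j : Fin p, ‖(c j : ℝ) • toEuc (fun i => (e j i : ℝ))‖ :=
          norm_sum_le _ _
      _ ≤ ∑ j : Fin p, 2 * V * Real.sqrt ((ℓ : ℝ) * n) := by
          apply Finset.sum_le_sum
          intro j _
          rw [norm_smul]
          have h1 : ‖(c j : ℝ)‖ ≤ 1 := by
            rcases hc j with h' | h' <;> simp [h']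
          have h2 : ‖toEuc (fun i => (e j i : ℝ))‖
              ≤ 2 * V * Real.sqrt ((ℓ : ℝ) * n) := by
            rw [← intEucNorm_eq_norm]; exact hne j
          calc ‖(c j : ℝ)‖ * ‖toEuc (fun i => (e j i : ℝ))‖
              ≤ 1 * (2 * V * Real.sqrt ((ℓ : ℝ) * n)) :=
                mul_le_mul h1 h2 (norm_nonneg _) zero_le_one
            _ = 2 * V * Real.sqrt ((ℓ : ℝ) * n) := one_mul _
      _ = p * (2 * V * Real.sqrt ((ℓ : ℝ) * n)) := by
          simp [Finset.sum_const, Finset.card_univ]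
      _ ≤ 2 * k * V * Real.sqrt (2 * k * ℓ * n) := by
          have hs : Real.sqrt ((ℓ : ℝ) * n) ≤ Real.sqrt (2 * k * ℓ * n) := by
            apply Real.sqrt_le_sqrt
            have : (1 : ℝ) ≤ 2 * k := by
              have : (1 : ℝ) ≤ (k : ℝ) := by exact_mod_cast hk
              nlinarith
            nlinarith [mul_nonneg (Nat.cast_nonneg ℓ) (Nat.cast_nonneg n : (0:ℝ) ≤ n)]
          have hpk' : (p : ℝ) ≤ (k : ℝ) := by exact_mod_cast hpk
          have hsn : (0:ℝ) ≤ Real.sqrt ((ℓ : ℝ) * n) := Real.sqrt_nonneg _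
          have hsn' : (0:ℝ) ≤ Real.sqrt (2 * k * ℓ * n) := Real.sqrt_nonneg _
          have hkV : (0:ℝ) ≤ 2 * k * V := by positivity
          nlinarith [mul_le_mul_of_nonneg_left hs hkV, Nat.cast_nonneg (α := ℝ) p,
            mul_nonneg hV hsn]
  · -- linearity
    have hv : (fun i => ((∑ j : Fin p, c j • e j) i : ZMod q))
        = ∑ j : Fin p, (c j : ZMod q) • (fun i => (e j i : ZMod q)) := by
      funext i
      simp [Finset.sum_apply]
    rw [hv]
    have hlin : A.mulVec (∑ j : Fin p, (c j : ZMod q) • (fun i => (e j i : ZMod q)))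
        = ∑ j : Fin p, (c j : ZMod q) • A.mulVec (fun i => (e j i : ZMod q)) := by
      simp only [← Matrix.mulVecLin_apply, map_sum, map_smul]
    rw [hlin]
    simp only [hAe]
    simp only [Finset.smul_sum]
    rw [Finset.sum_comm]
    refine Finset.sum_congr rfl fun i _ => ?_
    simp only [smul_smul, ← Finset.sum_smul]
    congr 1
    push_cast [Finset.sum_apply]
    rw [Finset.mul_sum]
    refine Finset.sum_congr rfl fun x _ => by push_cast [Pi.smul_apply, smul_eq_mul]; ring
end
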